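/- Let h = (h₁,…,h_{m₁}) and g = (g₁,…,g_{m₂}) be tuples of polynomials in ℝ[x₁,…,xₙ], let p, q ∈ ℝ[x], let ℓ ≥ 1 be an integer, and let c ≥ (1/(2ℓ))·(1 − 1/(2ℓ))^{2ℓ−1}. Assume p^{2ℓ} + q belongs to the ideal ⟨h⟩ and q ∈ Q(g). Then there exists an integer N > 0 such that for every ε > 0, setting φ_ε = −c·ε^{1−2ℓ}·(p^{2ℓ} + q) and θ_ε = ε + p + c·ε^{1−2ℓ}·p^{2ℓ} + c·ε^{1−2ℓ}·q, one has p + ε = φ_ε + θ_ε with φ_ε ∈ ⟨h⟩_{2N} and θ_ε ∈ Q_N(g). -/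

import Mathlib

open MvPolynomial Pointwise

/-- A polynomial is a sum of squares. -/
def IsSOS {n : ℕ} (p : MvPolynomial (Fin n) ℝ) : Prop :=
  ∃ (m : ℕ) (q : Fin m → MvPolynomial (Fin n) ℝ), p = ∑ i, q i ^ 2

/-- The `2k`-th truncated ideal generated by the tuple `h`. -/
def truncIdeal {n m : ℕ} (h : Fin m → MvPolynomial (Fin n) ℝ) (k : ℕ) :
    Set (MvPolynomial (Fin n) ℝ) :=
  {p | ∃ φ : Fin m → MvPolynomial (Fin n) ℝ,
    (∀ i, (φ i * h i).totalDegree ≤ 2 * k) ∧ p = ∑ i, φ i * h i}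

/-- The `k`-th truncated quadratic module generated by the tuple `g` (with `g₀ = 1`). -/
def truncQM {n m : ℕ} (g : Fin m → MvPolynomial (Fin n) ℝ) (k : ℕ) :
    Set (MvPolynomial (Fin n) ℝ) :=
  {p | ∃ σ : Fin (m + 1) → MvPolynomial (Fin n) ℝ,
    (∀ j, IsSOS (σ j) ∧
      (σ j * (Fin.cons 1 g : Fin (m + 1) → MvPolynomial (Fin n) ℝ) j).totalDegree ≤ 2 * k) ∧
    p = ∑ j, σ j * (Fin.cons 1 g : Fin (m + 1) → MvPolynomial (Fin n) ℝ) j}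

/-- The feasible set `K` of the problem `h = 0, g ≥ 0`. -/
def feasSet {n m₁ m₂ : ℕ} (h : Fin m₁ → MvPolynomial (Fin n) ℝ)
    (g : Fin m₂ → MvPolynomial (Fin n) ℝ) : Set (Fin n → ℝ) :=
  {x | (∀ i, eval x (h i) = 0) ∧ ∀ j, 0 ≤ eval x (g j)}

/-- The real variety `V_ℝ(h)`. -/
def realVariety {n m : ℕ} (h : Fin m → MvPolynomial (Fin n) ℝ) : Set (Fin n → ℝ) :=
  {x | ∀ i, eval x (h i) = 0}

/-- The vanishing ideal `I(S)` of a set `S ⊆ ℝⁿ`. -/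
def vanishIdeal {n : ℕ} (S : Set (Fin n → ℝ)) : Set (MvPolynomial (Fin n) ℝ) :=
  {p | ∀ u ∈ S, eval u p = 0}

/-- The `k`-th Lasserre bound `f_k` (an extended real). -/
noncomputable def lasserreBound {n m₁ m₂ : ℕ} (f : MvPolynomial (Fin n) ℝ)
    (h : Fin m₁ → MvPolynomial (Fin n) ℝ) (g : Fin m₂ → MvPolynomial (Fin n) ℝ)
    (k : ℕ) : EReal :=
  sSup {γ : EReal | ∃ r : ℝ, γ = (r : EReal) ∧ f - C r ∈ truncIdeal h k + truncQM g k}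

/-- `f_min`, the infimum of `f` over `K`, as an extended real (`⊤` if `K = ∅`). -/
noncomputable def fMin {n : ℕ} (f : MvPolynomial (Fin n) ℝ) (K : Set (Fin n → ℝ)) : EReal :=
  ⨅ x ∈ K, (eval x f : EReal)


section AuxSOS

variable {n : ℕ}

lemma isSOS_zero : IsSOS (0 : MvPolynomial (Fin n) ℝ) := ⟨0, fun _ => 0, by simp⟩

lemma isSOS_sq (q : MvPolynomial (Fin n) ℝ) : IsSOS (q ^ 2) := ⟨1, fun _ => q, by simp⟩

lemma IsSOS.add {p q : MvPolynomial (Fin n) ℝ} (hp : IsSOS p) (hq : IsSOS q) :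
    IsSOS (p + q) := by
  obtain ⟨m, u, rfl⟩ := hp
  obtain ⟨m', v, rfl⟩ := hq
  exact ⟨m + m', Fin.append u v, by
    rw [Fin.sum_univ_add]
    simp [Fin.append_left, Fin.append_right]⟩

lemma IsSOS.C_mul {p : MvPolynomial (Fin n) ℝ} {r : ℝ} (hr : 0 ≤ r) (hp : IsSOS p) :
    IsSOS (C r * p) := by
  obtain ⟨m, u, rfl⟩ := hp
  refine ⟨m, fun i => C (Real.sqrt r) * u i, ?_⟩
  rw [Finset.mul_sum]
  refine Finset.sum_congr rfl fun i _ => ?_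
  rw [mul_pow, ← map_pow, Real.sq_sqrt hr]

lemma isSOS_sum {ι : Type*} (s : Finset ι) (f : ι → MvPolynomial (Fin n) ℝ)
    (h : ∀ i ∈ s, IsSOS (f i)) : IsSOS (∑ i ∈ s, f i) :=
  Finset.sum_induction f IsSOS (fun _ _ => IsSOS.add) isSOS_zero h

end AuxSOS

lemma sq_mul_double_geom {R : Type*} [CommRing R] (u : R) (m : ℕ) :
    (u - 1) ^ 2 * ∑ j ∈ Finset.range m, ∑ i ∈ Finset.range j, u ^ i
      = u ^ m - (m : R) * u + ((m : R) - 1) := by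
  have h1 : ∀ k : ℕ, (u - 1) * ∑ i ∈ Finset.range k, u ^ i = u ^ k - 1 := fun k => by
    rw [mul_comm, geom_sum_mul]
  have h2 : (u - 1) * ∑ j ∈ Finset.range m, ∑ i ∈ Finset.range j, u ^ i
      = (∑ j ∈ Finset.range m, u ^ j) - m := by
    rw [Finset.mul_sum, Finset.sum_congr rfl fun j _ => h1 j, Finset.sum_sub_distrib]
    simp [Finset.card_range]
  have h3 : (u - 1) ^ 2 * ∑ j ∈ Finset.range m, ∑ i ∈ Finset.range j, u ^ i
      = (u - 1) * ((u - 1) * ∑ j ∈ Finset.range m, ∑ i ∈ Finset.range j, u ^ i) := by ring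
  rw [h3, h2, mul_sub, h1 m]
  ring

lemma core_identity {n ℓ : ℕ} (hℓ : 1 ≤ ℓ) (c ε a lam w c₀ : ℝ) (hε : 0 < ε)
    (ha : a = 1 - 1 / (2 * (ℓ : ℝ))) (hlam : lam = 1 / (2 * (ℓ : ℝ) * a))
    (hw : w = a ^ 2 / (ε * ε)) (hc₀ : c₀ = 1 / (2 * (ℓ : ℝ)) * a ^ (2 * ℓ - 1))
    (p : MvPolynomial (Fin n) ℝ) :
    C ε + p + C (c * ε ^ (1 - 2 * (ℓ : ℤ))) * p ^ (2 * ℓ) =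
      C (a / (2 * ε)) * (p + C (ε / a)) ^ 2
      + ∑ j ∈ Finset.range ℓ, ∑ i ∈ Finset.range j,
          C (ε * lam * w ^ i) * (p ^ i * (C w * p ^ 2 - 1)) ^ 2
      + C ((c - c₀) * (ε * (ε ^ (2 * ℓ))⁻¹)) * (p ^ ℓ) ^ 2 := by
  have hℓR : (1 : ℝ) ≤ (ℓ : ℝ) := by exact_mod_cast hℓ
  have hℓ0 : (ℓ : ℝ) ≠ 0 := by linarith
  have ha0 : (0 : ℝ) < a := by
    rw [ha]
    have : 1 / (2 * (ℓ : ℝ)) ≤ 1 / 2 := by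
      apply one_div_le_one_div_of_le <;> linarith
    linarith
  have hE0 : (ε ^ (2 * ℓ) : ℝ) ≠ 0 := pow_ne_zero _ hε.ne'
  have hzpow : (ε : ℝ) ^ (1 - 2 * (ℓ : ℤ)) = ε * (ε ^ (2 * ℓ))⁻¹ := by
    have hcast : (2 * (ℓ : ℤ)) = ((2 * ℓ : ℕ) : ℤ) := by push_cast; ring
    rw [sub_eq_add_neg, zpow_add₀ hε.ne', zpow_one, hcast, zpow_neg, zpow_natCast]
  apply MvPolynomial.funext
  intro x
  simp only [map_add, map_mul, map_pow, eval_C, map_sub, map_one, map_sum]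
  set t := eval x p with htdef
  have hsum : ∑ j ∈ Finset.range ℓ, ∑ i ∈ Finset.range j,
      (ε * lam * w ^ i) * (t ^ i * (w * t ^ 2 - 1)) ^ 2
      = ε * lam * ((w * t ^ 2 - 1) ^ 2
          * ∑ j ∈ Finset.range ℓ, ∑ i ∈ Finset.range j, (w * t ^ 2) ^ i) := by
    rw [Finset.mul_sum, Finset.mul_sum]
    refine Finset.sum_congr rfl fun j _ => ?_
    rw [Finset.mul_sum, Finset.mul_sum]
    refine Finset.sum_congr rfl fun i _ => ?_
    ring
  rw [hsum, sq_mul_double_geom, hzpow]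
  have e1 : (t ^ 2) ^ ℓ = t ^ (2 * ℓ) := by rw [← pow_mul]
  have e2 : (a ^ 2) ^ ℓ = a ^ (2 * ℓ - 1) * a := by
    rw [← pow_mul, ← pow_succ]
    congr 1
    omega
  have e3 : (ε * ε) ^ ℓ = ε ^ (2 * ℓ) := by rw [← sq, ← pow_mul]
  have h1 : (w * t ^ 2) ^ ℓ = (a ^ (2 * ℓ - 1) * a * (ε ^ (2 * ℓ))⁻¹) * t ^ (2 * ℓ) := by
    rw [mul_pow, e1, hw, div_pow, e2, e3, div_eq_mul_inv]
  have h2 : (t ^ ℓ) ^ 2 = t ^ (2 * ℓ) := (pow_mul' t 2 ℓ).symm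
  rw [h1, h2, hlam, hc₀, hw]
  obtain ⟨A, hA⟩ : ∃ A : ℝ, a ^ (2 * ℓ - 1) = A := ⟨_, rfl⟩
  obtain ⟨E, hE⟩ : ∃ E : ℝ, ε ^ (2 * ℓ) = E := ⟨_, rfl⟩
  obtain ⟨T2, hT2⟩ : ∃ T2 : ℝ, t ^ (2 * ℓ) = T2 := ⟨_, rfl⟩
  rw [hE] at hE0
  rw [hA, hE, hT2]
  have ha' : a ≠ 0 := ha0.ne'
  have hK2 : ε * (1 / (2 * (ℓ : ℝ) * a)) * ((ℓ : ℝ) * (a ^ 2 / (ε * ε))) = a / (2 * ε) := by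
    field_simp
  have hK1 : a / (2 * ε) * (2 * (ε / a)) = 1 := by field_simp
  have hK0 : a / (2 * ε) * (ε / a) ^ 2 + ε * (1 / (2 * (ℓ : ℝ) * a)) * ((ℓ : ℝ) - 1) = ε := by
    rw [ha]
    have h2l : (2 : ℝ) * (ℓ : ℝ) ≠ 0 := by positivity
    have hb : 2 * (ℓ : ℝ) - 1 ≠ 0 := by
      have : (1 : ℝ) ≤ 2 * (ℓ : ℝ) - 1 := by linarith
      linarith
    rw [ha] at ha'
    field_simp [hb]
    ring
  have hKT : ε * (1 / (2 * (ℓ : ℝ) * a)) * (A * a * E⁻¹)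
      + (c - 1 / (2 * (ℓ : ℝ)) * A) * (ε * E⁻¹) = c * (ε * E⁻¹) := by
    field_simp
    ring
  linear_combination t ^ 2 * hK2 - t * hK1 - hK0 - T2 * hKT

/-- Lemma 2.1 (ii)-(iii): if `p^{2ℓ} + q ∈ ⟨h⟩` and `q ∈ Q(g)`, then there is `N > 0`
such that for all `ε > 0`, `p + ε = φ_ε + θ_ε` with `φ_ε ∈ ⟨h⟩_{2N}` and `θ_ε ∈ Q_N(g)`,
where `φ_ε = −c·ε^{1−2ℓ}·(p^{2ℓ} + q)` and
`θ_ε = ε + p + c·ε^{1−2ℓ}·p^{2ℓ} + c·ε^{1−2ℓ}·q`. -/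
theorem eps_perturbation_representation
    {n m₁ m₂ : ℕ} (h : Fin m₁ → MvPolynomial (Fin n) ℝ)
    (g : Fin m₂ → MvPolynomial (Fin n) ℝ)
    (p q : MvPolynomial (Fin n) ℝ) (ℓ : ℕ) (hℓ : 1 ≤ ℓ) (c : ℝ)
    (hc : (1 / (2 * (ℓ : ℝ))) * (1 - 1 / (2 * (ℓ : ℝ))) ^ (2 * ℓ - 1) ≤ c)
    (hpq : p ^ (2 * ℓ) + q ∈ Ideal.span (Set.range h))
    (hq : q ∈ ⋃ k : ℕ, truncQM g k) :
    ∃ N : ℕ, 0 < N ∧ ∀ ε : ℝ, 0 < ε →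
      p + C ε =
        (-C (c * ε ^ (1 - 2 * (ℓ : ℤ))) * (p ^ (2 * ℓ) + q)) +
          (C ε + p + C (c * ε ^ (1 - 2 * (ℓ : ℤ))) * p ^ (2 * ℓ) +
            C (c * ε ^ (1 - 2 * (ℓ : ℤ))) * q) ∧
      (-C (c * ε ^ (1 - 2 * (ℓ : ℤ))) * (p ^ (2 * ℓ) + q)) ∈ truncIdeal h N ∧
      (C ε + p + C (c * ε ^ (1 - 2 * (ℓ : ℤ))) * p ^ (2 * ℓ) +
        C (c * ε ^ (1 - 2 * (ℓ : ℤ))) * q) ∈ truncQM g N := by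
  classical
  obtain ⟨φ, hφ⟩ := Ideal.mem_span_range_iff_exists_fun.mp hpq
  obtain ⟨Sk, hq'⟩ := Set.mem_iUnion.mp hq
  obtain ⟨σq, hσq, hqrep⟩ := hq'
  set S := Finset.univ.sup (fun i : Fin m₁ => (φ i * h i).totalDegree) with hS
  set M := ℓ * p.totalDegree with hM
  refine ⟨S + Sk + M + 1, by omega, ?_⟩
  intro ε hε
  have hℓR : (1 : ℝ) ≤ (ℓ : ℝ) := by exact_mod_cast hℓ
  have ha0 : (0 : ℝ) < 1 - 1 / (2 * (ℓ : ℝ)) := by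
    have : 1 / (2 * (ℓ : ℝ)) ≤ 1 / 2 := by
      apply one_div_le_one_div_of_le <;> linarith
    linarith
  have hc0pos : (0 : ℝ) < 1 / (2 * (ℓ : ℝ)) * (1 - 1 / (2 * (ℓ : ℝ))) ^ (2 * ℓ - 1) :=
    mul_pos (by positivity) (pow_pos ha0 _)
  have hcpos : 0 < c := lt_of_lt_of_le hc0pos hc
  set τ := c * ε ^ (1 - 2 * (ℓ : ℤ)) with hτ
  have hτ0 : 0 ≤ τ := mul_nonneg hcpos.le (zpow_nonneg hε.le _)
  set core : MvPolynomial (Fin n) ℝ := C ε + p + C τ * p ^ (2 * ℓ) with hcore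
  have hcoreSOS : IsSOS core := by
    rw [hcore, core_identity hℓ c ε (1 - 1 / (2 * (ℓ : ℝ)))
      (1 / (2 * (ℓ : ℝ) * (1 - 1 / (2 * (ℓ : ℝ)))))
      ((1 - 1 / (2 * (ℓ : ℝ))) ^ 2 / (ε * ε))
      (1 / (2 * (ℓ : ℝ)) * (1 - 1 / (2 * (ℓ : ℝ))) ^ (2 * ℓ - 1)) hε rfl rfl rfl rfl p]
    refine IsSOS.add (IsSOS.add ?_ ?_) ?_
    · exact IsSOS.C_mul (div_nonneg ha0.le (by positivity)) (isSOS_sq _)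
    · refine isSOS_sum _ _ fun j _ => isSOS_sum _ _ fun i _ => IsSOS.C_mul ?_ (isSOS_sq _)
      have hlam0 : (0:ℝ) ≤ 1 / (2 * (ℓ : ℝ) * (1 - 1 / (2 * (ℓ : ℝ)))) := by
        apply le_of_lt
        apply one_div_pos.mpr
        have : (0:ℝ) < 2 * (ℓ : ℝ) := by linarith
        exact mul_pos this ha0
      have hw0 : (0:ℝ) ≤ (1 - 1 / (2 * (ℓ : ℝ))) ^ 2 / (ε * ε) := by positivity
      exact mul_nonneg (mul_nonneg hε.le hlam0) (pow_nonneg hw0 i)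
    · exact IsSOS.C_mul (mul_nonneg (sub_nonneg.mpr hc) (by positivity)) (isSOS_sq _)
  have hcoredeg : core.totalDegree ≤ 2 * M := by
    have hd1 : p.totalDegree ≤ 2 * M := by
      rw [hM, ← mul_assoc]
      exact Nat.le_mul_of_pos_left _ (by omega)
    have hd2 : (C τ * p ^ (2 * ℓ)).totalDegree ≤ 2 * M := by
      refine le_trans (totalDegree_mul _ _) ?_
      rw [totalDegree_C, zero_add, hM, ← mul_assoc]
      exact totalDegree_pow _ _
    refine le_trans (totalDegree_add _ _) (max_le (le_trans (totalDegree_add _ _)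
      (max_le ?_ hd1)) hd2)
    simp
  refine ⟨by ring, ?_, ?_⟩
  · -- truncIdeal part
    refine ⟨fun i => -(C τ * φ i), fun i => ?_, ?_⟩
    · have hre : -(C τ * φ i) * h i = -(C τ * (φ i * h i)) := by ring
      rw [hre, totalDegree_neg]
      refine le_trans (totalDegree_mul _ _) ?_
      rw [totalDegree_C, zero_add]
      have hle : (φ i * h i).totalDegree ≤ S :=
        Finset.le_sup (f := fun i : Fin m₁ => (φ i * h i).totalDegree) (Finset.mem_univ i)
      omega
    · calc -C τ * (p ^ (2 * ℓ) + q) = -(C τ * ∑ i, φ i * h i) := by rw [hφ]; ring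
        _ = ∑ i, -(C τ * (φ i * h i)) := by
            rw [Finset.mul_sum, ← Finset.sum_neg_distrib]
        _ = ∑ i, -(C τ * φ i) * h i := Finset.sum_congr rfl fun i _ => by ring
  · -- truncQM part
    refine ⟨fun j => C τ * σq j + if j = 0 then core else 0, fun j => ⟨?_, ?_⟩, ?_⟩
    · refine IsSOS.add (IsSOS.C_mul hτ0 (hσq j).1) ?_
      by_cases hj : j = 0
      · rw [if_pos hj]; exact hcoreSOS
      · rw [if_neg hj]; exact isSOS_zero
    · rw [add_mul]
      refine le_trans (totalDegree_add _ _) (max_le ?_ ?_)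
      · rw [mul_assoc]
        refine le_trans (totalDegree_mul _ _) ?_
        rw [totalDegree_C, zero_add]
        have := (hσq j).2
        omega
      · by_cases hj : j = 0
        · rw [if_pos hj, hj]
          have hG0 : (Fin.cons 1 g : Fin (m₂ + 1) → MvPolynomial (Fin n) ℝ) 0 = 1 :=
            Fin.cons_zero _ _
          rw [hG0, mul_one]
          omega
        · rw [if_neg hj, zero_mul, totalDegree_zero]
          exact Nat.zero_le _
    · have hG0 : (Fin.cons 1 g : Fin (m₂ + 1) → MvPolynomial (Fin n) ℝ) 0 = 1 :=
        Fin.cons_zero _ _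
      calc C ε + p + C τ * p ^ (2 * ℓ) + C τ * q = core + C τ * q := by rw [hcore]
        _ = C τ * (∑ j, σq j * (Fin.cons 1 g : Fin (m₂ + 1) → MvPolynomial (Fin n) ℝ) j)
            + ∑ j, (if j = 0 then
                core * (Fin.cons 1 g : Fin (m₂ + 1) → MvPolynomial (Fin n) ℝ) j else 0) := by
            rw [← hqrep]
            rw [Finset.sum_ite_eq' Finset.univ (0 : Fin (m₂ + 1))
              (fun j => core * (Fin.cons 1 g : Fin (m₂ + 1) → MvPolynomial (Fin n) ℝ) j)]
            simp only [Finset.mem_univ, if_true, hG0, mul_one]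
            ring
        _ = ∑ j, (C τ * σq j + if j = 0 then core else 0)
              * (Fin.cons 1 g : Fin (m₂ + 1) → MvPolynomial (Fin n) ℝ) j := by
            rw [Finset.mul_sum, ← Finset.sum_add_distrib]
            refine Finset.sum_congr rfl fun j _ => ?_
            by_cases hj : j = 0
            · rw [if_pos hj, if_pos hj]
              ring
            · rw [if_neg hj, if_neg hj]
              ring
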